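/- arXiv:2407.02704 — 8 statements merged into one kernel-verified Lean document; each statement's English description precedes it below -/
import Mathlib

section
/- For nonempty lists with concatenation flatten μ and put replacing the last element, the put-associativity axiom holds: put(μ(put(x,y)), z) = μ(put(x, put(y,z))) for all x : M M A, y : M A, z : A. -/
inductive NE (α : Type) : Type
  | single : α → NE α
  | cons : α → NE α → NE α

namespace NE

def map {α β : Type} (f : α → β) : NE α → NE β
  | single a => single (f a)
  | cons a t => cons (f a) (map f t)

def last {α : Type} : NE α → α
  | single a => a
  | cons _ t => last t

def head {α : Type} : NE α → α
  | single a => a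
  | cons a _ => a

def append {α : Type} : NE α → NE α → NE α
  | single a, m => cons a m
  | cons a t, m => cons a (append t m)

/-- Flatten (concatenation). -/
def mu {α : Type} : NE (NE α) → NE α
  | single l => l
  | cons l t => append l (mu t)

/-- Singleton. -/
def eta {α : Type} (a : α) : NE α := single a

/-- List of nonempty prefixes. -/
def delta {α : Type} : NE α → NE (NE α)
  | single a => single (single a)
  | cons a t => cons (single a) (map (cons a) (delta t))

/-- List of nonempty suffixes. -/
def suffixes {α : Type} : NE α → NE (NE α)
  | single a => single (single a)
  | cons a t => cons (cons a t) (suffixes t)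

/-- Replace the last element. -/
def putLast {α : Type} : NE α → α → NE α
  | single _, b => single b
  | cons a t, b => cons a (putLast t b)

def length {α : Type} : NE α → Nat
  | single _ => 1
  | cons _ t => length t + 1

end NE

lemma putLast_append {α : Type} (l m : NE α) (z : α) :
    NE.putLast (NE.append l m) z = NE.append l (NE.putLast m z) := by
  induction l with
  | single a => rfl
  | cons a t ih => simp [NE.append, NE.putLast, ih]

/-- Put-associativity for nonempty lists: `put(μ(put(x,y)), z) = μ(put(x, put(y,z)))`. -/
theorem put_assoc (α : Type) (x : NE (NE α)) (y : NE α) (z : α) :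
    NE.putLast (NE.mu (NE.putLast x y)) z = NE.mu (NE.putLast x (NE.putLast y z)) := by
  induction x with
  | single l => rfl
  | cons l t ih => simp [NE.putLast, NE.mu, putLast_append, ih]
end

section
/- For nonempty lists with the prefix comonad, the flatten-expand coherence axiom holds: for any nonempty list of nonempty lists x, δ(μ(x)) = μ((Map work)(δ(x))), where work(w) = (Map μ)((Map put)(strength(w, δ(ε(w))))). -/
namespace NE

theorem map_map {α β γ : Type} (f : β → γ) (g : α → β) :
    ∀ s : NE α, map f (map g s) = map (fun a => f (g a)) s
  | single a => rfl
  | cons a t => by simp [map, map_map f g t]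

theorem map_id {α : Type} : ∀ s : NE α, map (fun a => a) s = s
  | single a => rfl
  | cons a t => by simp [map, map_id t]

theorem map_append {α β : Type} (f : α → β) :
    ∀ s m : NE α, map f (append s m) = append (map f s) (map f m)
  | single a, m => rfl
  | cons a t, m => by simp [map, append, map_append f t m]

theorem map_mu {α β : Type} (f : α → β) :
    ∀ y : NE (NE α), map f (mu y) = mu (map (map f) y)
  | single l => rfl
  | cons l t => by simp [map, mu, map_append, map_mu f t]

theorem delta_append {α : Type} :
    ∀ l m : NE α, delta (append l m) = append (delta l) (map (append l) (delta m))
  | single a, m => rfl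
  | cons a t, m => by
    show cons (single a) (map (cons a) (delta (append t m))) = _
    rw [delta_append t m, map_append]
    simp [append, delta, map_map]

/-- the simplified `work`. -/
def work {α : Type} (w : NE (NE α)) : NE (NE α) :=
  map (fun p => mu (putLast w p)) (delta (last w))

theorem work_cons {α : Type} (l : NE α) (w : NE (NE α)) :
    work (cons l w) = map (append l) (work w) := by
  simp [work, last, map_map, putLast, mu]

theorem main {α : Type} : ∀ x : NE (NE α),
    delta (mu x) = mu (map work (delta x))
  | single l => by
    simp [mu, delta, map, work, last, putLast, map_map]
    exact (map_id _).symm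
  | cons l t => by
    show delta (append l (mu t)) = _
    rw [delta_append, main t]
    simp [delta, map, mu, map_map, work_cons]
    congr 1
    · simp [work, last, putLast, mu]
      exact (map_id _).symm
    · rw [map_mu, map_map]

end NE

/-- Flatten-expand coherence for nonempty lists with the prefix comonad:
`δ(μ(x)) = μ((Map work)(δ(x)))` where
`work(w) = (Map μ)((Map put)(strength(w, δ(ε(w)))))`. -/
theorem flatten_expand (α : Type) (x : NE (NE α)) :
    NE.delta (NE.mu x) =
      NE.mu (NE.map
        (fun w : NE (NE α) =>
          NE.map NE.mu
            (NE.map (fun q : NE (NE α) × NE α => NE.putLast q.1 q.2)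
              (NE.map (fun p => (w, p)) (NE.delta (NE.last w)))))
        (NE.delta x)) := by
  have h : ∀ w : NE (NE α),
      NE.map NE.mu
        (NE.map (fun q : NE (NE α) × NE α => NE.putLast q.1 q.2)
          (NE.map (fun p => (w, p)) (NE.delta (NE.last w)))) = NE.work w := by
    intro w
    simp [NE.map_map, NE.work]
  simp only [h]
  exact NE.main x
end

section
/- A transduction F : Σ⁺ → Γ⁺ is computed by a Mealy machine if and only if it is an L⃗-recognizable transduction, i.e., there exists a finite semigroup S, h : Σ → S, λ : S → Γ with F(a₁…aₙ) = λ(h(a₁)) λ(h(a₁)·h(a₂)) … λ(h(a₁)·…·h(aₙ)). -/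
/-- The run of a Mealy machine with transition function `d` from state `q`. -/
def mealyRun {Q Sg Ga : Type} (d : Q × Sg → Q × Ga) : Q → NE Sg → NE Ga
  | q, NE.single a => NE.single (d (q, a)).2
  | q, NE.cons a t => NE.cons (d (q, a)).2 (mealyRun d (d (q, a)).1 t)

/-- The semigroup-recognizable output, with accumulated product `s` of the prefix read so
far. -/
def sgRun {S Sg Ga : Type} [Mul S] (h : Sg → S) (lam : S → Ga) : S → NE Sg → NE Ga
  | s, NE.single a => NE.single (lam (s * h a))
  | s, NE.cons a t => NE.cons (lam (s * h a)) (sgRun h lam (s * h a) t)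

/-- The output of an `L⃗`-recognizable transduction: the `i`-th output letter is
`λ(h(a₁)·…·h(aᵢ))`. -/
def sgOut {S Sg Ga : Type} [Mul S] (h : Sg → S) (lam : S → Ga) : NE Sg → NE Ga
  | NE.single a => NE.single (lam (h a))
  | NE.cons a t => NE.cons (lam (h a)) (sgRun h lam (h a) t)


section Aux

variable {Q Sg Ga : Type}

/-- Forward direction semigroup: functions Q → Q × Ga with "run-then-run" mul. -/
instance fwdMul : Mul (Q → Q × Ga) := ⟨fun f g => fun q => g (f q).1⟩

instance fwdSemigroup : Semigroup (Q → Q × Ga) where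
  mul_assoc f g h := rfl

theorem fwd_run (d : Q × Sg → Q × Ga) (q0 : Q) :
    ∀ (w : NE Sg) (s : Q → Q × Ga),
      sgRun (S := Q → Q × Ga) (fun a => fun q => d (q, a)) (fun t => (t q0).2) s w
        = mealyRun d (s q0).1 w
  | NE.single a, s => rfl
  | NE.cons a t, s => by
      simp only [sgRun, mealyRun]
      rw [fwd_run d q0 t]
      rfl

theorem fwd_out (d : Q × Sg → Q × Ga) (q0 : Q) :
    ∀ w : NE Sg,
      sgOut (S := Q → Q × Ga) (fun a => fun q => d (q, a)) (fun t => (t q0).2) w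
        = mealyRun d q0 w
  | NE.single a => rfl
  | NE.cons a t => by
      simp only [sgOut, mealyRun]
      rw [fwd_run d q0 t]

variable {S : Type} [Semigroup S]

/-- Backward direction Mealy machine from a semigroup. -/
def bwdD (h : Sg → S) (lam : S → Ga) : Option S × Sg → Option S × Ga
  | (none, a) => (some (h a), lam (h a))
  | (some s, a) => (some (s * h a), lam (s * h a))

theorem bwd_run (h : Sg → S) (lam : S → Ga) :
    ∀ (w : NE Sg) (s : S), mealyRun (bwdD h lam) (some s) w = sgRun h lam s w
  | NE.single a, s => rfl
  | NE.cons a t, s => by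
      simp only [mealyRun, sgRun, bwdD]
      rw [bwd_run h lam t]

theorem bwd_out (h : Sg → S) (lam : S → Ga) :
    ∀ w : NE Sg, mealyRun (bwdD h lam) none w = sgOut h lam w
  | NE.single a => rfl
  | NE.cons a t => by
      simp only [mealyRun, sgOut, bwdD]
      rw [bwd_run h lam t]

end Aux

/-- A transduction `F : Σ⁺ → Γ⁺` is computed by a Mealy machine iff it is an
`L⃗`-recognizable transduction, i.e. given by a finite semigroup `S`, `h : Σ → S` and
`λ : S → Γ` via prefix products. -/

theorem mealy_iff_semigroup_recognizable (Sg Ga : Type) [Finite Sg] [Finite Ga]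
    (F : NE Sg → NE Ga) :
    (∃ (Q : Type) (_ : Finite Q) (q0 : Q) (d : Q × Sg → Q × Ga),
        ∀ w : NE Sg, F w = mealyRun d q0 w) ↔
    (∃ (S : Type) (_ : Finite S) (_ : Semigroup S) (h : Sg → S) (lam : S → Ga),
        ∀ w : NE Sg, F w = sgOut h lam w) := by
  constructor
  · rintro ⟨Q, hQ, q0, d, hF⟩
    haveI := hQ
    refine ⟨Q → Q × Ga, inferInstance, inferInstance,
      fun a => fun q => d (q, a), fun t => (t q0).2, fun w => ?_⟩
    rw [hF w, fwd_out d q0 w]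
  · rintro ⟨S, hS, hSg, h, lam, hF⟩
    haveI := hS
    refine ⟨Option S, Finite.of_equiv _ (Equiv.optionEquivSumPUnit.{0,0} S).symm, none,
      @bwdD Sg Ga S hSg h lam, fun w => ?_⟩
    rw [hF w, @bwd_out Sg Ga S hSg h lam w]
end

section
/- For every Eilenberg-Moore algebra (A, Π) of the pointed nonempty list monad L̄, there exist monoids M_L and M_R and functions h_L : A → M_L, h_R : A → M_R, and a function g : M_L × A × M_R → A such that Π([a₁,…,a̲ᵢ,…,aₙ]) = g(h_L(a₁)·…·h_L(aᵢ₋₁), aᵢ, h_R(aᵢ₊₁)·…·h_R(aₙ)) for all pointed lists; moreover if A is finite then M_L and M_R can be chosen finite. -/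
/-- A pointed nonempty list: a nonempty list with exactly one distinguished (underlined)
position, represented as the prefix before the point, the pointed element, and the suffix
after it. -/
structure PL (α : Type) : Type where
  pre : List α
  focus : α
  suf : List α

/-- The underlying list of a pointed list. -/
def PL.toList {α : Type} (p : PL α) : List α := p.pre ++ p.focus :: p.suf

/-- Functorial action. -/
def PL.map {α β : Type} (f : α → β) (p : PL α) : PL β :=
  ⟨p.pre.map f, f p.focus, p.suf.map f⟩

/-- Singleton pointed list. -/
def PL.eta {α : Type} (a : α) : PL α := ⟨[], a, []⟩

/-- Flattening of a pointed list of pointed lists, keeping the doubly-underlined element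
underlined. -/
def PL.mu {α : Type} (p : PL (PL α)) : PL α :=
  ⟨(p.pre.map PL.toList).flatten ++ p.focus.pre, p.focus.focus,
    p.focus.suf ++ (p.suf.map PL.toList).flatten⟩

section Aux

variable {A : Type} (P : PL A → A)

/-- Left translation by a single element, as an endofunction. -/
def PLhL (a : A) : Function.End A := fun x => P ⟨[a], x, []⟩

/-- Right translation by a single element, in the opposite endofunction monoid. -/
def PLhR (a : A) : (Function.End A)ᵐᵒᵖ := MulOpposite.op (fun x => P ⟨[], x, [a]⟩)

theorem PL_unit' (unitAx : ∀ a : A, P (PL.eta a) = a) (x : A) :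
    P ⟨[], x, []⟩ = x := unitAx x

theorem PL_map_eta (unitAx : ∀ a : A, P (PL.eta a) = a) (l : List A) :
    List.map (P ∘ PL.eta) l = l := by
  induction l with
  | nil => rfl
  | cons a l ih => simp [ih, unitAx a]

theorem PL_flat_eta (l : List A) :
    (List.map (PL.toList ∘ PL.eta) l).flatten = l := by
  induction l with
  | nil => rfl
  | cons a l ih => simpa [PL.toList, PL.eta] using ih

theorem PL_lemA (unitAx : ∀ a : A, P (PL.eta a) = a)
    (assocAx : ∀ l : PL (PL A), P (PL.map P l) = P (PL.mu l)) :
    ∀ (l : List A) (x : A), ((l.map (PLhL P)).prod : Function.End A) x = P ⟨l, x, []⟩ := by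
  intro l
  induction l with
  | nil => intro x; exact (unitAx x).symm
  | cons a l ih =>
    intro x
    have h : (((a :: l).map (PLhL P)).prod : Function.End A) x
        = PLhL P a (((l.map (PLhL P)).prod : Function.End A) x) := rfl
    rw [h, ih]
    have := assocAx ⟨[PL.eta a], ⟨l, x, []⟩, []⟩
    simpa [PL.map, PL.mu, PL.toList, PL.eta, PL_unit' P unitAx, PLhL] using this

theorem PL_lemB (unitAx : ∀ a : A, P (PL.eta a) = a)
    (assocAx : ∀ l : PL (PL A), P (PL.map P l) = P (PL.mu l)) :
    ∀ (r : List A) (x : A), (MulOpposite.unop ((r.map (PLhR P)).prod)) x = P ⟨[], x, r⟩ := by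
  intro r
  induction r with
  | nil => intro x; exact (unitAx x).symm
  | cons a r ih =>
    intro x
    have h : (MulOpposite.unop (((a :: r).map (PLhR P)).prod)) x
        = (MulOpposite.unop ((r.map (PLhR P)).prod)) (P ⟨[], x, [a]⟩) := rfl
    rw [h, ih]
    have := assocAx ⟨[], ⟨[], x, [a]⟩, r.map PL.eta⟩
    simpa [PL.map, PL.mu, PL.toList, PL_map_eta P unitAx, PL_flat_eta] using this

theorem PL_lemC (unitAx : ∀ a : A, P (PL.eta a) = a)
    (assocAx : ∀ l : PL (PL A), P (PL.map P l) = P (PL.mu l)) (p : PL A) :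
    P p = P ⟨p.pre, P ⟨[], p.focus, p.suf⟩, []⟩ := by
  obtain ⟨l, x, r⟩ := p
  have := assocAx ⟨l.map PL.eta, ⟨[], x, r⟩, []⟩
  simpa [PL.map, PL.mu, PL.toList, PL_map_eta P unitAx, PL_flat_eta] using this.symm

theorem PL_main (unitAx : ∀ a : A, P (PL.eta a) = a)
    (assocAx : ∀ l : PL (PL A), P (PL.map P l) = P (PL.mu l)) (p : PL A) :
    P p = ((p.pre.map (PLhL P)).prod : Function.End A)
      ((MulOpposite.unop ((p.suf.map (PLhR P)).prod)) p.focus) := by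
  rw [PL_lemA P unitAx assocAx, PL_lemB P unitAx assocAx]
  exact PL_lemC P unitAx assocAx p

end Aux

/-- For every Eilenberg–Moore algebra `(A, P)` of the pointed nonempty-list monad, there
are monoids `M_L`, `M_R`, functions `h_L`, `h_R` and `g` such that the product of any
pointed list is determined by the `M_L`-product of the prefix, the pointed element, and
the `M_R`-product of the suffix; moreover if `A` is finite then `M_L` and `M_R` can be
chosen finite. -/
theorem pointed_algebra_product_via_two_monoids (A : Type) (P : PL A → A)
    (unitAx : ∀ a : A, P (PL.eta a) = a)
    (assocAx : ∀ l : PL (PL A), P (PL.map P l) = P (PL.mu l)) :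
    (∃ (ML MR : Type) (_ : Monoid ML) (_ : Monoid MR)
        (hL : A → ML) (hR : A → MR) (g : ML → A → MR → A),
        ∀ p : PL A, P p = g (p.pre.map hL).prod p.focus (p.suf.map hR).prod) ∧
    (Finite A →
      ∃ (ML MR : Type) (_ : Finite ML) (_ : Finite MR) (_ : Monoid ML) (_ : Monoid MR)
          (hL : A → ML) (hR : A → MR) (g : ML → A → MR → A),
          ∀ p : PL A, P p = g (p.pre.map hL).prod p.focus (p.suf.map hR).prod) := by
  constructor
  · exact ⟨Function.End A, (Function.End A)ᵐᵒᵖ, inferInstance, inferInstance,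
      PLhL P, PLhR P, fun m a m' => m (MulOpposite.unop m' a),
      fun p => PL_main P unitAx assocAx p⟩
  · intro hfin
    haveI hf : Finite (Function.End A) := inferInstanceAs (Finite (A → A))
    exact ⟨Function.End A, (Function.End A)ᵐᵒᵖ, hf, Finite.of_equiv _ MulOpposite.opEquiv,
      inferInstance, inferInstance,
      PLhL P, PLhR P, fun m a m' => m (MulOpposite.unop m' a),
      fun p => PL_main P unitAx assocAx p⟩
end

section
/- Define concat : M A × M A → M A by concat(k, l) = μ(put((Map η)(k), l)). Assuming put-associativity (put(μ(put(x,y)), z) = μ(put(x, put(y,z)))) and naturality of put and the algebra laws, contexts compose: ctx_k ∘ ctx_l = ctx_{concat(k,l)} for all k, l ∈ M A. Consequently the set of contexts C_A = {ctx_l | l ∈ M A} is closed under composition. -/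
/-- Define `concat(k,l) = μ(put((Map η)(k), l))`.  Assuming the functor, monad and
naturality axioms, naturality of `put`, and put-associativity, contexts compose:
`ctx_k ∘ ctx_l = ctx_{concat(k,l)}`.  Consequently the set of contexts is closed under
composition. -/
theorem contexts_compose (M : Type → Type)
    (map : {A B : Type} → (A → B) → M A → M B)
    (eta : {A : Type} → A → M A)
    (mu : {A : Type} → M (M A) → M A)
    (put : {A : Type} → M A × A → M A)
    (mapId : ∀ (A : Type) (x : M A), map (id : A → A) x = x)
    (mapComp : ∀ (A B C : Type) (f : B → C) (g : A → B) (x : M A),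
      map f (map g x) = map (f ∘ g) x)
    (muNat : ∀ (A B : Type) (f : A → B) (x : M (M A)),
      mu (map (map f) x) = map f (mu x))
    (etaNat : ∀ (A B : Type) (f : A → B) (x : A), eta (f x) = map f (eta x))
    (putNat : ∀ (A B : Type) (f : A → B) (l : M A) (a : A),
      map f (put (l, a)) = put (map f l, f a))
    (muAssoc : ∀ (A : Type) (x : M (M (M A))), mu (mu x) = mu (map mu x))
    (muEta : ∀ (A : Type) (x : M A), mu (eta x) = x)
    (muMapEta : ∀ (A : Type) (x : M A), mu (map eta x) = x)
    (putAssoc : ∀ (A : Type) (x : M (M A)) (y : M A) (z : A),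
      put (mu (put (x, y)), z) = mu (put (x, put (y, z))))
    (A : Type) (P : M A → A)
    (algUnit : ∀ a : A, P (eta a) = a)
    (algAssoc : ∀ l : M (M A), P (map P l) = P (mu l)) :
    (∀ k l : M A,
      (fun x => P (put (k, x))) ∘ (fun x => P (put (l, x))) =
        fun x => P (put (mu (put (map eta k, l)), x))) ∧
    (∀ f g : A → A,
      (∃ k : M A, f = fun x => P (put (k, x))) →
      (∃ l : M A, g = fun x => P (put (l, x))) →
      ∃ m : M A, f ∘ g = fun x => P (put (m, x))) := by
  have key : ∀ k l : M A,
      (fun x => P (put (k, x))) ∘ (fun x => P (put (l, x))) =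
        fun x => P (put (mu (put (map eta k, l)), x)) := by
    intro k l
    funext x
    simp only [Function.comp]
    rw [putAssoc, ← algAssoc, putNat, mapComp]
    have : (P ∘ eta : A → A) = id := funext algUnit
    rw [this, mapId]
  refine ⟨key, ?_⟩
  rintro f g ⟨k, rfl⟩ ⟨l, rfl⟩
  exact ⟨mu (put (map eta k, l)), key k l⟩
end

section
/- Let M be a monad and comonad with a put operation satisfying flatten-extract, singleton-expand, singleton-extract, get-put, put-get, put-put, put-associativity, singleton-put, and flatten-expand. Given M-algebras (S₁,Π₁), (S₂,Π₂), the generalized wreath product S₃ = S₁ × ((S₁ → S₁) → S₂) with the product Π₃ defined via contexts is a valid M-algebra: Π₃ ∘ η = id and Π₃ ∘ (M Π₃) = Π₃ ∘ μ. -/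
/-- Generalized wreath product: given `M`-algebras `(S₁, Π₁)` and `(S₂, Π₂)`, the set
`S₃ = S₁ × ((S₁ → S₁) → S₂)` with the product `Π₃` defined via contexts is a valid
`M`-algebra, assuming the coherence axioms between the monad, comonad and `put`
structures of `M`. -/
theorem wreath_product_is_algebra
    (M : Type → Type)
    (map : {A B : Type} → (A → B) → M A → M B)
    (eta : {A : Type} → A → M A)
    (mu : {A : Type} → M (M A) → M A)
    (eps : {A : Type} → M A → A)
    (delta : {A : Type} → M A → M (M A))
    (put : {A : Type} → M A × A → M A)
    -- functor axioms
    (mapId : ∀ (A : Type) (x : M A), map (id : A → A) x = x)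
    (mapComp : ∀ (A B C : Type) (f : B → C) (g : A → B) (x : M A),
      map f (map g x) = map (f ∘ g) x)
    -- naturality
    (muNat : ∀ (A B : Type) (f : A → B) (x : M (M A)), mu (map (map f) x) = map f (mu x))
    (etaNat : ∀ (A B : Type) (f : A → B) (x : A), eta (f x) = map f (eta x))
    (epsNat : ∀ (A B : Type) (f : A → B) (x : M A), f (eps x) = eps (map f x))
    (deltaNat : ∀ (A B : Type) (f : A → B) (x : M A),
      delta (map f x) = map (map f) (delta x))
    (putNat : ∀ (A B : Type) (f : A → B) (l : M A) (a : A),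
      map f (put (l, a)) = put (map f l, f a))
    -- monad axioms
    (muAssoc : ∀ (A : Type) (x : M (M (M A))), mu (mu x) = mu (map mu x))
    (muEta : ∀ (A : Type) (x : M A), mu (eta x) = x)
    (muMapEta : ∀ (A : Type) (x : M A), mu (map eta x) = x)
    -- comonad axioms
    (deltaAssoc : ∀ (A : Type) (x : M A), delta (delta x) = map delta (delta x))
    (epsDelta : ∀ (A : Type) (x : M A), eps (delta x) = x)
    (mapEpsDelta : ∀ (A : Type) (x : M A), map eps (delta x) = x)
    -- coherence axioms
    (flattenExtract : ∀ (A : Type) (x : M (M A)), eps (mu x) = eps (eps x))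
    (singletonExpand : ∀ (A : Type) (x : A), delta (eta x) = map eta (eta x))
    (singletonExtract : ∀ (A : Type) (x : A), eps (eta x) = x)
    (getPut : ∀ (A : Type) (l : M A), put (l, eps l) = l)
    (putGet : ∀ (A : Type) (l : M A) (a : A), eps (put (l, a)) = a)
    (putPut : ∀ (A : Type) (l : M A) (a b : A), put (put (l, a), b) = put (l, b))
    (putAssoc : ∀ (A : Type) (x : M (M A)) (y : M A) (z : A),
      put (mu (put (x, y)), z) = mu (put (x, put (y, z))))
    (singletonPut : ∀ (A : Type) (x y : A), put (eta x, y) = eta y)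
    (flattenExpand : ∀ (A : Type) (x : M (M A)),
      delta (mu x) =
        mu (map (fun w : M (M A) =>
          map mu (map put (map (fun p : M A => (w, p)) (delta (eps w)))))
          (delta x)))
    (S1 S2 : Type) (P1 : M S1 → S1) (P2 : M S2 → S2)
    (alg1Unit : ∀ x : S1, P1 (eta x) = x)
    (alg1Assoc : ∀ l : M (M S1), P1 (map P1 l) = P1 (mu l))
    (alg2Unit : ∀ x : S2, P2 (eta x) = x)
    (alg2Assoc : ∀ l : M (M S2), P2 (map P2 l) = P2 (mu l)) :
    let ctx1 : M S1 → S1 → S1 := fun l x => P1 (put (l, x))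
    let P3 : M (S1 × ((S1 → S1) → S2)) → S1 × ((S1 → S1) → S2) := fun l =>
      (P1 (map Prod.fst l),
       fun c => P2 (map
         (fun m : M (S1 × ((S1 → S1) → S2)) =>
           (eps m).2 (c ∘ ctx1 (map Prod.fst m)))
         (delta l)))
    (∀ x : S1 × ((S1 → S1) → S2), P3 (eta x) = x) ∧
    (∀ l : M (M (S1 × ((S1 → S1) → S2))), P3 (map P3 l) = P3 (mu l)) := by

  intro ctx1 P3
  constructor
  · intro x
    have hctx : ctx1 (map Prod.fst (eta x)) = id := by
      funext y
      show P1 (put (map Prod.fst (eta x), y)) = y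
      rw [← etaNat, singletonPut, alg1Unit]
    refine Prod.ext ?_ ?_
    · show P1 (map Prod.fst (eta x)) = x.1
      rw [← etaNat, alg1Unit]
    · show (fun c => P2 (map
          (fun m : M (S1 × ((S1 → S1) → S2)) =>
            (eps m).2 (c ∘ ctx1 (map Prod.fst m)))
          (delta (eta x)))) = x.2
      funext c
      rw [singletonExpand, mapComp, ← etaNat, alg2Unit]
      show (eps (eta x)).2 (c ∘ ctx1 (map Prod.fst (eta x))) = x.2 c
      rw [singletonExtract, hctx]
      rfl
  · intro l
    refine Prod.ext ?_ ?_
    · show P1 (map Prod.fst (map P3 l)) = P1 (map Prod.fst (mu l))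
      rw [mapComp]
      rw [show (Prod.fst ∘ P3 : M (S1 × ((S1 → S1) → S2)) → S1)
            = P1 ∘ map (Prod.fst : S1 × ((S1 → S1) → S2) → S1) from rfl]
      rw [← mapComp, alg1Assoc, muNat]
    · funext c
      let S3 := S1 × ((S1 → S1) → S2)
      let hfun : M S3 → S2 := fun m => (eps m).2 (c ∘ ctx1 (map Prod.fst m))
      let gfun : M (M S3) → M S2 := fun w =>
        map (fun m : M S3 =>
          (eps m).2 ((c ∘ ctx1 (map P1 (map (map Prod.fst) w))) ∘ ctx1 (map Prod.fst m)))
          (delta (eps w))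
      have key : ∀ (w : M (M S3)) (p : M S3),
          hfun (mu (put (w, p)))
            = (eps p).2 ((c ∘ ctx1 (map P1 (map (map Prod.fst) w))) ∘ ctx1 (map Prod.fst p)) := by
        intro w p
        have e1 : eps (mu (put (w, p))) = eps p := by
          rw [flattenExtract, putGet]
        have e2 : ctx1 (map Prod.fst (mu (put (w, p))))
            = ctx1 (map P1 (map (map Prod.fst) w)) ∘ ctx1 (map Prod.fst p) := by
          funext y
          show P1 (put (map Prod.fst (mu (put (w, p))), y))
             = P1 (put (map P1 (map (map Prod.fst) w), P1 (put (map Prod.fst p, y))))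
          rw [← muNat, putNat, putAssoc, ← alg1Assoc, putNat]
        show (eps (mu (put (w, p)))).2 (c ∘ ctx1 (map Prod.fst (mu (put (w, p))))) = _
        rw [e1, e2]
        rfl
      have step1 : ∀ w : M (M S3), hfun (map P3 w) = P2 (gfun w) := by
        intro w
        show (eps (map P3 w)).2 (c ∘ ctx1 (map Prod.fst (map P3 w))) = P2 (gfun w)
        rw [← epsNat, mapComp]
        rw [show (Prod.fst ∘ P3 : M S3 → S1) = P1 ∘ map (Prod.fst : S3 → S1) from rfl]
        rw [← mapComp]
      have lhs_eq : P2 (map hfun (delta (map P3 l))) = P2 (mu (map gfun (delta l))) := by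
        rw [deltaNat, mapComp]
        rw [show (hfun ∘ map P3 : M (M S3) → S2) = P2 ∘ gfun from funext step1]
        rw [← mapComp, alg2Assoc]
      have rhs_eq : P2 (map hfun (delta (mu l))) = P2 (mu (map gfun (delta l))) := by
        rw [flattenExpand, ← muNat, mapComp]
        refine congrArg P2 (congrArg mu (congrArg (fun f => map f (delta l)) (funext fun w => ?_)))
        show map hfun (map mu (map put (map (fun p : M S3 => (w, p)) (delta (eps w))))) = gfun w
        rw [mapComp, mapComp, mapComp]
        show map (fun p : M S3 => hfun (mu (put (w, p)))) (delta (eps w)) = gfun w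
        exact congrArg (fun f => map f (delta (eps w))) (funext (key w))
      show P2 (map hfun (delta (map P3 l))) = P2 (map hfun (delta (mu l)))
      rw [lhs_eq, rhs_eq]
end

section
/- Under the same coherence axioms, the M-transduction defined by the generalized wreath product (S₃, h₃, λ₃) computes the composition of the M-transductions (S₁,h₁,λ₁) : M Σ → M Γ and (S₂,h₂,λ₂) : M Γ → M Δ; i.e., (M λ₃)∘(M Π₃)∘δ∘(M h₃) = (M λ₂)∘(M Π₂)∘δ∘(M h₂)∘(M λ₁)∘(M Π₁)∘δ∘(M h₁). -/
/-- Under the coherence axioms, the `M`-transduction given by the generalized wreath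
product `(S₃, h₃, λ₃)` computes the composition of the `M`-transductions
`(S₁, h₁, λ₁) : M Σ → M Γ` and `(S₂, h₂, λ₂) : M Γ → M Δ`. -/
theorem wreath_product_composes
    (M : Type → Type)
    (map : {A B : Type} → (A → B) → M A → M B)
    (eta : {A : Type} → A → M A)
    (mu : {A : Type} → M (M A) → M A)
    (eps : {A : Type} → M A → A)
    (delta : {A : Type} → M A → M (M A))
    (put : {A : Type} → M A × A → M A)
    -- functor axioms
    (mapId : ∀ (A : Type) (x : M A), map (id : A → A) x = x)
    (mapComp : ∀ (A B C : Type) (f : B → C) (g : A → B) (x : M A),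
      map f (map g x) = map (f ∘ g) x)
    -- naturality
    (muNat : ∀ (A B : Type) (f : A → B) (x : M (M A)), mu (map (map f) x) = map f (mu x))
    (etaNat : ∀ (A B : Type) (f : A → B) (x : A), eta (f x) = map f (eta x))
    (epsNat : ∀ (A B : Type) (f : A → B) (x : M A), f (eps x) = eps (map f x))
    (deltaNat : ∀ (A B : Type) (f : A → B) (x : M A),
      delta (map f x) = map (map f) (delta x))
    (putNat : ∀ (A B : Type) (f : A → B) (l : M A) (a : A),
      map f (put (l, a)) = put (map f l, f a))
    -- monad axioms
    (muAssoc : ∀ (A : Type) (x : M (M (M A))), mu (mu x) = mu (map mu x))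
    (muEta : ∀ (A : Type) (x : M A), mu (eta x) = x)
    (muMapEta : ∀ (A : Type) (x : M A), mu (map eta x) = x)
    -- comonad axioms
    (deltaAssoc : ∀ (A : Type) (x : M A), delta (delta x) = map delta (delta x))
    (epsDelta : ∀ (A : Type) (x : M A), eps (delta x) = x)
    (mapEpsDelta : ∀ (A : Type) (x : M A), map eps (delta x) = x)
    -- coherence axioms
    (flattenExtract : ∀ (A : Type) (x : M (M A)), eps (mu x) = eps (eps x))
    (singletonExpand : ∀ (A : Type) (x : A), delta (eta x) = map eta (eta x))
    (singletonExtract : ∀ (A : Type) (x : A), eps (eta x) = x)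
    (getPut : ∀ (A : Type) (l : M A), put (l, eps l) = l)
    (putGet : ∀ (A : Type) (l : M A) (a : A), eps (put (l, a)) = a)
    (putPut : ∀ (A : Type) (l : M A) (a b : A), put (put (l, a), b) = put (l, b))
    (putAssoc : ∀ (A : Type) (x : M (M A)) (y : M A) (z : A),
      put (mu (put (x, y)), z) = mu (put (x, put (y, z))))
    (singletonPut : ∀ (A : Type) (x y : A), put (eta x, y) = eta y)
    (flattenExpand : ∀ (A : Type) (x : M (M A)),
      delta (mu x) =
        mu (map (fun w : M (M A) =>
          map mu (map put (map (fun p : M A => (w, p)) (delta (eps w)))))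
          (delta x)))
    (S1 S2 : Type) (P1 : M S1 → S1) (P2 : M S2 → S2)
    (alg1Unit : ∀ x : S1, P1 (eta x) = x)
    (alg1Assoc : ∀ l : M (M S1), P1 (map P1 l) = P1 (mu l))
    (alg2Unit : ∀ x : S2, P2 (eta x) = x)
    (alg2Assoc : ∀ l : M (M S2), P2 (map P2 l) = P2 (mu l))
    (X Y Z : Type)
    (h1 : X → S1) (lam1 : S1 → Y) (h2 : Y → S2) (lam2 : S2 → Z) :
    let ctx1 : M S1 → S1 → S1 := fun l x => P1 (put (l, x))
    let P3 : M (S1 × ((S1 → S1) → S2)) → S1 × ((S1 → S1) → S2) := fun l =>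
      (P1 (map Prod.fst l),
       fun c => P2 (map
         (fun m : M (S1 × ((S1 → S1) → S2)) =>
           (eps m).2 (c ∘ ctx1 (map Prod.fst m)))
         (delta l)))
    let h3 : X → S1 × ((S1 → S1) → S2) := fun a =>
      (h1 a, fun c => h2 (lam1 (c (h1 a))))
    let lam3 : S1 × ((S1 → S1) → S2) → Z := fun s => lam2 (s.2 id)
    ∀ w : M X,
      map lam3 (map P3 (delta (map h3 w))) =
        map lam2 (map P2 (delta (map h2
          (map lam1 (map P1 (delta (map h1 w))))))) := by
  dsimp only
  intro w
  simp only [deltaNat, deltaAssoc, mapComp]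
  congr 1
  funext m
  simp only [Function.comp, deltaNat, mapComp]
  refine congrArg lam2 (congrArg P2 (congrArg (fun F => map F (delta m)) ?_))
  funext n
  simp only [Function.comp_apply, Function.id_comp]
  rw [← epsNat, mapComp]
  show h2 (lam1 (P1 (put (map h1 n, h1 (eps n))))) = h2 (lam1 (P1 (map h1 n)))
  rw [epsNat X S1 h1 n, getPut]
end

section
/- Assuming the flatten-extract, put and comonad axioms, the top path of the flatten-expand axiom equals the top path of its bialgebraic formulation: for all x ∈ M M A, μ ∘ (M(M μ)) ∘ (M(M put)) ∘ (M strength) ∘ (M⟨id, δ∘ε⟩) ∘ δ applied to x equals (M μ) ∘ μ ∘ (M(M put)) ∘ (M strength) ∘ (M⟨M ε, ε⟩) ∘ δ ∘ (M δ) applied to x. -/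
/-- Assuming the functor, monad, comonad, naturality and coherence axioms (but not
flatten-expand itself), the top path of the flatten-expand axiom equals the top path of
its bialgebraic formulation:
`μ ∘ M(M μ) ∘ M(M put) ∘ M strength ∘ M⟨id, δ∘ε⟩ ∘ δ`
equals
`M μ ∘ μ ∘ M(M put) ∘ M strength ∘ M⟨M ε, ε⟩ ∘ δ ∘ M δ`. -/
theorem flatten_expand_bialgebra_equiv
    (M : Type → Type)
    (map : {A B : Type} → (A → B) → M A → M B)
    (eta : {A : Type} → A → M A)
    (mu : {A : Type} → M (M A) → M A)
    (eps : {A : Type} → M A → A)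
    (delta : {A : Type} → M A → M (M A))
    (put : {A : Type} → M A × A → M A)
    -- functor axioms
    (mapId : ∀ (A : Type) (x : M A), map (id : A → A) x = x)
    (mapComp : ∀ (A B C : Type) (f : B → C) (g : A → B) (x : M A),
      map f (map g x) = map (f ∘ g) x)
    -- naturality
    (muNat : ∀ (A B : Type) (f : A → B) (x : M (M A)), mu (map (map f) x) = map f (mu x))
    (etaNat : ∀ (A B : Type) (f : A → B) (x : A), eta (f x) = map f (eta x))
    (epsNat : ∀ (A B : Type) (f : A → B) (x : M A), f (eps x) = eps (map f x))
    (deltaNat : ∀ (A B : Type) (f : A → B) (x : M A),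
      delta (map f x) = map (map f) (delta x))
    (putNat : ∀ (A B : Type) (f : A → B) (l : M A) (a : A),
      map f (put (l, a)) = put (map f l, f a))
    -- monad axioms
    (muAssoc : ∀ (A : Type) (x : M (M (M A))), mu (mu x) = mu (map mu x))
    (muEta : ∀ (A : Type) (x : M A), mu (eta x) = x)
    (muMapEta : ∀ (A : Type) (x : M A), mu (map eta x) = x)
    -- comonad axioms
    (deltaAssoc : ∀ (A : Type) (x : M A), delta (delta x) = map delta (delta x))
    (epsDelta : ∀ (A : Type) (x : M A), eps (delta x) = x)
    (mapEpsDelta : ∀ (A : Type) (x : M A), map eps (delta x) = x)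
    -- coherence axioms
    (flattenExtract : ∀ (A : Type) (x : M (M A)), eps (mu x) = eps (eps x))
    (singletonExpand : ∀ (A : Type) (x : A), delta (eta x) = map eta (eta x))
    (singletonExtract : ∀ (A : Type) (x : A), eps (eta x) = x)
    (getPut : ∀ (A : Type) (l : M A), put (l, eps l) = l)
    (putGet : ∀ (A : Type) (l : M A) (a : A), eps (put (l, a)) = a)
    (putPut : ∀ (A : Type) (l : M A) (a b : A), put (put (l, a), b) = put (l, b))
    (putAssoc : ∀ (A : Type) (x : M (M A)) (y : M A) (z : A),
      put (mu (put (x, y)), z) = mu (put (x, put (y, z))))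
    (singletonPut : ∀ (A : Type) (x y : A), put (eta x, y) = eta y)
    :
    ∀ (A : Type) (x : M (M A)),
      mu (map (fun w : M (M A) =>
            map mu (map put (map (fun p : M A => (w, p)) (delta (eps w)))))
          (delta x)) =
        map mu (mu (map (fun z : M (M (M A)) =>
            map put (map (fun p : M A => (map eps z, p)) (eps z)))
          (delta (map delta x)))) := by
  intro A x
  have L : mu (map (fun w : M (M A) =>
        map mu (map put (map (fun p : M A => (w, p)) (delta (eps w)))))
      (delta x)) =
      map mu (mu (map (fun w : M (M A) =>
        map put (map (fun p : M A => (w, p)) (delta (eps w)))) (delta x))) := by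
    rw [← muNat, mapComp]
    rfl
  rw [L, deltaNat, mapComp]
  have key : ((fun z : M (M (M A)) =>
      map put (map (fun p : M A => (map eps z, p)) (eps z))) ∘ map delta) =
      fun w : M (M A) => map put (map (fun p : M A => (w, p)) (delta (eps w))) := by
    funext w
    simp only [Function.comp]
    have h1 : map (eps (A := M A)) (map delta w) = w := by
      rw [mapComp]
      have : (eps ∘ delta : M A → M A) = id := funext fun y => epsDelta A y
      rw [this, mapId]
    have h2 : eps (map (delta (A := A)) w) = delta (eps w) :=
      (epsNat _ _ delta w).symm
    rw [h1, h2]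
  rw [key]
end
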